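/- Let n ≥ 2 and let U : [−1,1] → ℝ be strictly concave and strictly increasing, and let r̂ = (r̂₁,…,r̂ₙ) be the unique maximizer of S(r₁,…,rₙ) = Σ_{1≤i<j≤n} U(r_i − r_j) over [0,1]ⁿ. Then 1 − r̂_i = r̂_{n−i+1} for every 1 ≤ i ≤ n. -/

import Mathlib

open Finset Set

/-- If `U` is strictly concave and strictly increasing on `[-1,1]`
and `r` is the (unique) maximizer of `S(r) = ∑_{i<j} U(r_i - r_j)` over `[0,1]^n`,
then `1 - r_i = r_{n-i+1}` for all `i` (here `Fin.rev i` is the index `n-i+1`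
in one-based notation). -/
private lemma flip_sum' (n : ℕ) (f : Fin n → Fin n → ℝ) :
    ∑ i : Fin n, ∑ j ∈ Finset.Ioi i, f j.rev i.rev
      = ∑ i : Fin n, ∑ j ∈ Finset.Ioi i, f i j := by
  rw [Finset.sum_sigma', Finset.sum_sigma']
  refine Finset.sum_nbij' (fun p : (_ : Fin n) × Fin n => (⟨p.2.rev, p.1.rev⟩ : (_ : Fin n) × Fin n))
    (fun p : (_ : Fin n) × Fin n => (⟨p.2.rev, p.1.rev⟩ : (_ : Fin n) × Fin n)) ?_ ?_ ?_ ?_ ?_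
  · rintro ⟨i, j⟩ hp
    simp only [Finset.mem_sigma, Finset.mem_univ, Finset.mem_Ioi] at hp ⊢
    exact ⟨trivial, Fin.rev_lt_rev.mpr hp.2⟩
  · rintro ⟨i, j⟩ hp
    simp only [Finset.mem_sigma, Finset.mem_univ, Finset.mem_Ioi] at hp ⊢
    exact ⟨trivial, Fin.rev_lt_rev.mpr hp.2⟩
  · rintro ⟨i, j⟩ _; simp [Fin.rev_rev]
  · rintro ⟨i, j⟩ _; simp [Fin.rev_rev]
  · rintro ⟨i, j⟩ _; simp [Fin.rev_rev]

theorem stmt3 (n : ℕ) (hn : 2 ≤ n) (U : ℝ → ℝ)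
    (hUconc : StrictConcaveOn ℝ (Set.Icc (-1 : ℝ) 1) U)
    (hUmono : StrictMonoOn U (Set.Icc (-1 : ℝ) 1))
    (r : Fin n → ℝ) (hr : ∀ i, r i ∈ Set.Icc (0 : ℝ) 1)
    (hropt : ∀ u : Fin n → ℝ, (∀ i, u i ∈ Set.Icc (0 : ℝ) 1) →
      (∑ i : Fin n, ∑ j ∈ Finset.Ioi i, U (u i - u j)) ≤
        ∑ i : Fin n, ∑ j ∈ Finset.Ioi i, U (r i - r j)) :
    ∀ i : Fin n, 1 - r i = r i.rev := by
  haveI : NeZero n := ⟨by omega⟩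
  have hpos : ∀ i : Fin n, i ≠ 0 → (0 : Fin n) < i := by
    intro i h
    rw [Fin.lt_def, Fin.val_zero]
    exact Nat.pos_of_ne_zero fun hh => h (Fin.ext (by rw [hh, Fin.val_zero]))
  have hr0 : ∀ i, 0 ≤ r i := fun i => (hr i).1
  have hr1 : ∀ i, r i ≤ 1 := fun i => (hr i).2
  have hd : ∀ a b : Fin n, r a - r b ∈ Set.Icc (-1 : ℝ) 1 := fun a b =>
    ⟨by linarith [hr0 a, hr1 b], by linarith [hr1 a, hr0 b]⟩
  set u : Fin n → ℝ := fun i => 1 - r i.rev with hu_def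
  have hu : ∀ i, u i ∈ Set.Icc (0 : ℝ) 1 := by
    intro i
    simp only [hu_def, Set.mem_Icc]
    constructor <;> linarith [hr0 i.rev, hr1 i.rev]
  have hud : ∀ a b : Fin n, u a - u b ∈ Set.Icc (-1 : ℝ) 1 := by
    intro a b
    simp only [hu_def, Set.mem_Icc]
    constructor <;> linarith [hr0 a.rev, hr1 a.rev, hr0 b.rev, hr1 b.rev]
  have hSu : (∑ i : Fin n, ∑ j ∈ Finset.Ioi i, U (u i - u j)) =
      ∑ i : Fin n, ∑ j ∈ Finset.Ioi i, U (r i - r j) := by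
    have := flip_sum' n (fun a b => U (r a - r b))
    rw [← this]
    refine Finset.sum_congr rfl fun i _ => Finset.sum_congr rfl fun j _ => ?_
    simp only [hu_def]; ring_nf
  set m : Fin n → ℝ := fun i => (r i + u i) / 2 with hm_def
  have hm : ∀ i, m i ∈ Set.Icc (0 : ℝ) 1 := by
    intro i
    simp only [hm_def, hu_def, Set.mem_Icc]
    constructor <;> linarith [hr0 i, hr1 i, hr0 i.rev, hr1 i.rev]
  have hmid : ∀ a b : ℝ, a ∈ Set.Icc (-1:ℝ) 1 → b ∈ Set.Icc (-1:ℝ) 1 →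
      (U a + U b) / 2 ≤ U ((a + b) / 2) := by
    intro a b ha hb
    have h := hUconc.concaveOn.2 ha hb (by norm_num : (0:ℝ) ≤ 1/2) (by norm_num : (0:ℝ) ≤ 1/2) (by norm_num)
    simp only [smul_eq_mul] at h
    have e : (1/2:ℝ) * a + (1/2:ℝ) * b = (a + b) / 2 := by ring
    rw [e] at h
    linarith
  have hmid' : ∀ a b : ℝ, a ∈ Set.Icc (-1:ℝ) 1 → b ∈ Set.Icc (-1:ℝ) 1 → a ≠ b →
      (U a + U b) / 2 < U ((a + b) / 2) := by
    intro a b ha hb hab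
    have h := hUconc.2 ha hb hab (by norm_num : (0:ℝ) < 1/2) (by norm_num : (0:ℝ) < 1/2) (by norm_num)
    simp only [smul_eq_mul] at h
    have e : (1/2:ℝ) * a + (1/2:ℝ) * b = (a + b) / 2 := by ring
    rw [e] at h
    linarith
  have hmsplit : ∀ i j : Fin n, m i - m j = ((r i - r j) + (u i - u j)) / 2 := by
    intro i j; simp only [hm_def]; ring
  have key : ∀ i j : Fin n, i < j → r i - r j = u i - u j := by
    by_contra hcon
    push_neg at hcon
    obtain ⟨i0, j0, hij0, hne0⟩ := hcon
    have hlt : (∑ i : Fin n, ∑ j ∈ Finset.Ioi i, U (r i - r j)) <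
        ∑ i : Fin n, ∑ j ∈ Finset.Ioi i, U (m i - m j) := by
      have step : ∀ i : Fin n,
          (∑ j ∈ Finset.Ioi i, (U (r i - r j) + U (u i - u j)) / 2) ≤
          ∑ j ∈ Finset.Ioi i, U (m i - m j) := by
        intro i
        refine Finset.sum_le_sum fun j _ => ?_
        rw [hmsplit i j]
        exact hmid _ _ (hd i j) (hud i j)
      have stepi0 : (∑ j ∈ Finset.Ioi i0, (U (r i0 - r j) + U (u i0 - u j)) / 2) <
          ∑ j ∈ Finset.Ioi i0, U (m i0 - m j) := by
        refine Finset.sum_lt_sum (fun j _ => by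
            rw [hmsplit i0 j]; exact hmid _ _ (hd i0 j) (hud i0 j)) ⟨j0, Finset.mem_Ioi.mpr hij0, ?_⟩
        rw [hmsplit i0 j0]
        exact hmid' _ _ (hd i0 j0) (hud i0 j0) hne0
      have h1 : (∑ i : Fin n, ∑ j ∈ Finset.Ioi i, (U (r i - r j) + U (u i - u j)) / 2) <
          ∑ i : Fin n, ∑ j ∈ Finset.Ioi i, U (m i - m j) :=
        Finset.sum_lt_sum (fun i _ => step i) ⟨i0, Finset.mem_univ _, stepi0⟩
      have h2 : (∑ i : Fin n, ∑ j ∈ Finset.Ioi i, (U (r i - r j) + U (u i - u j)) / 2) =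
          ((∑ i : Fin n, ∑ j ∈ Finset.Ioi i, U (r i - r j)) +
           (∑ i : Fin n, ∑ j ∈ Finset.Ioi i, U (u i - u j))) / 2 := by
        simp only [← Finset.sum_add_distrib, Finset.sum_div]
      rw [h2, hSu] at h1
      linarith
    exact absurd (hropt m hm) (not_le.mpr hlt)
  set c : ℝ := r 0 - u 0 with hc_def
  have hcall : ∀ i : Fin n, r i - u i = c := by
    intro i
    rcases eq_or_ne i 0 with h | h
    · rw [h]
    · have h0i : (0 : Fin n) < i := hpos i h
      have := key 0 i h0i
      simp only [hc_def]; linarith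
  have hsum : ∀ i : Fin n, r i + r i.rev = 1 + c := by
    intro i
    have h := hcall i
    simp only [hu_def] at h
    linarith
  rcases lt_trichotomy c 0 with hc | hc | hc
  · exfalso
    set w : Fin n → ℝ := Function.update r 0 (r 0 - c) with hw_def
    have hw0 : w 0 = r 0 - c := Function.update_self 0 _ r
    have hwj : ∀ j : Fin n, j ≠ 0 → w j = r j := fun j hj => Function.update_of_ne hj _ r
    have hr0top : r 0 ≤ 1 + c := by have := hsum 0; linarith [hr0 (0:Fin n).rev]
    have hwmem : ∀ i, w i ∈ Set.Icc (0 : ℝ) 1 := by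
      intro i
      rcases eq_or_ne i 0 with h | h
      · rw [h, hw0]; exact ⟨by linarith [hr0 0], by linarith⟩
      · rw [hwj i h]; exact hr i
    have hlt : (∑ i : Fin n, ∑ j ∈ Finset.Ioi i, U (r i - r j)) <
        ∑ i : Fin n, ∑ j ∈ Finset.Ioi i, U (w i - w j) := by
      refine Finset.sum_lt_sum (fun i _ => ?_) ⟨0, Finset.mem_univ _, ?_⟩
      · rcases eq_or_ne i 0 with h | h
        · subst h
          refine Finset.sum_le_sum fun j hj => ?_
          have hj0 : j ≠ 0 := (Finset.mem_Ioi.mp hj).ne'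
          rw [hw0, hwj j hj0]
          refine le_of_lt (hUmono (hd 0 j) ⟨?_, ?_⟩ ?_)
          · linarith [(hd 0 j).1]
          · linarith [hr0 j]
          · linarith [(hd 0 j).1]
        · refine le_of_eq (Finset.sum_congr rfl fun j hj => ?_)
          have hij : i < j := Finset.mem_Ioi.mp hj
          have hi0 : (0:Fin n) < i := hpos i h
          have hj0 : j ≠ 0 := fun hh => by subst hh; exact absurd (hi0.trans hij) (lt_irrefl _)
          rw [hwj i h, hwj j hj0]
      · have hne : (Finset.Ioi (0 : Fin n)).Nonempty := by
          refine ⟨⟨1, by omega⟩, Finset.mem_Ioi.mpr ?_⟩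
          rw [Fin.lt_def, Fin.val_zero]
          norm_num
        refine Finset.sum_lt_sum_of_nonempty hne fun j hj => ?_
        have hj0 : j ≠ 0 := (Finset.mem_Ioi.mp hj).ne'
        rw [hw0, hwj j hj0]
        refine hUmono (hd 0 j) ⟨?_, ?_⟩ ?_
        · linarith [(hd 0 j).1]
        · linarith [hr0 j]
        · linarith [(hd 0 j).1]
    exact absurd (hropt w hwmem) (not_le.mpr hlt)
  · intro i
    have := hsum i
    rw [hc] at this
    linarith
  · exfalso
    set L : Fin n := (0 : Fin n).rev with hL_def
    have hLrev : L.rev = 0 := by rw [hL_def, Fin.rev_rev]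
    have hLval : (L : ℕ) = n - 1 := by
      rw [hL_def, Fin.val_rev_zero, Nat.pred_eq_sub_one]
    have hLtop : ∀ j : Fin n, j ≤ L := by
      intro j
      rw [Fin.le_def, hLval]
      omega
    have h0L : (0 : Fin n) < L := by
      rw [Fin.lt_def, Fin.val_zero, hLval]
      omega
    have hIoiL : Finset.Ioi L = ∅ :=
      Finset.eq_empty_of_forall_notMem fun j hj =>
        absurd (Finset.mem_Ioi.mp hj) (not_lt.mpr (hLtop j))
    have hrL : r L = 1 + c - r 0 := by
      have h := hsum L; rw [hLrev] at h; linarith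
    have hrLc : c ≤ r L := by rw [hrL]; linarith [hr1 0]
    set w : Fin n → ℝ := Function.update r L (r L - c) with hw_def
    have hwL : w L = r L - c := Function.update_self L _ r
    have hwj : ∀ j : Fin n, j ≠ L → w j = r j := fun j hj => Function.update_of_ne hj _ r
    have hwmem : ∀ i, w i ∈ Set.Icc (0 : ℝ) 1 := by
      intro i
      rcases eq_or_ne i L with h | h
      · rw [h, hwL]; exact ⟨by linarith, by linarith [hr1 L]⟩
      · rw [hwj i h]; exact hr i
    have hlt : (∑ i : Fin n, ∑ j ∈ Finset.Ioi i, U (r i - r j)) <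
        ∑ i : Fin n, ∑ j ∈ Finset.Ioi i, U (w i - w j) := by
      refine Finset.sum_lt_sum (fun i _ => ?_) ⟨0, Finset.mem_univ _, ?_⟩
      · rcases eq_or_ne i L with h | h
        · subst h; rw [hIoiL]; simp
        · rw [hwj i h]
          refine Finset.sum_le_sum fun j hj => ?_
          rcases eq_or_ne j L with h' | h'
          · subst h'
            rw [hwL]
            refine le_of_lt (hUmono (hd i L) ⟨?_, ?_⟩ ?_)
            · linarith [(hd i L).1]
            · linarith [hr1 i]
            · linarith [(hd i L).1]
          · rw [hwj j h']
      · rw [hwj 0 (ne_of_lt h0L)]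
        refine Finset.sum_lt_sum (fun j hj => ?_) ⟨L, Finset.mem_Ioi.mpr h0L, ?_⟩
        · rcases eq_or_ne j L with h' | h'
          · subst h'
            rw [hwL]
            refine le_of_lt (hUmono (hd 0 L) ⟨?_, ?_⟩ ?_)
            · linarith [(hd 0 L).1]
            · linarith [hr1 0]
            · linarith [(hd 0 L).1]
          · rw [hwj j h']
        · rw [hwL]
          refine hUmono (hd 0 L) ⟨?_, ?_⟩ ?_
          · linarith [(hd 0 L).1]
          · linarith [hr1 0]
          · linarith [(hd 0 L).1]
    exact absurd (hropt w hwmem) (not_le.mpr hlt)
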